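/- Let ε ∈ (0, 1/2], let λ ∈ ℂ with |λ|² ≤ 1/2 − ε, let x ≥ 0 be real, and let u ∈ [0, x]. Then the complex number z = x + λu satisfies: (Re z)² − (Im z)² ≥ ε·x², Re z ≥ (1 − 2^{−1/2})·x, and |Im z| ≤ (1 + 2ε)^{−1/2}·Re z. -/

import Mathlib

set_option maxHeartbeats 1000000


open Real Complex

theorem scaled_point_sector (ε : ℝ) (hε : ε ∈ Set.Ioc 0 (1 / 2 : ℝ))
    (lam : ℂ) (hlam : ‖lam‖ ^ 2 ≤ 1 / 2 - ε)
    (x : ℝ) (hx : 0 ≤ x) (u : ℝ) (hu : u ∈ Set.Icc 0 x) :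
    (((x : ℂ) + lam * u).re ^ 2 - ((x : ℂ) + lam * u).im ^ 2 ≥ ε * x ^ 2) ∧
    (((x : ℂ) + lam * u).re ≥ (1 - (Real.sqrt 2)⁻¹) * x) ∧
    |((x : ℂ) + lam * u).im| ≤ (Real.sqrt (1 + 2 * ε))⁻¹ * ((x : ℂ) + lam * u).re := by
  obtain ⟨hε0, hε2⟩ := hε
  obtain ⟨hu0, hux⟩ := hu
  set a := lam.re with ha
  set b := lam.im with hb
  have hab : a ^ 2 + b ^ 2 ≤ 1 / 2 - ε := by
    have := Complex.sq_norm lam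
    rw [Complex.normSq_apply] at this
    nlinarith [hlam]
  clear hlam
  have hre : ((x : ℂ) + lam * u).re = x + a * u := by simp [ha]
  have him : ((x : ℂ) + lam * u).im = b * u := by simp [hb]
  rw [hre, him]
  have hs : (Real.sqrt 2)⁻¹ ^ 2 = 1 / 2 := by
    rw [inv_pow, Real.sq_sqrt (by norm_num : (2:ℝ) ≥ 0)]; norm_num
  have hs0 : 0 < (Real.sqrt 2)⁻¹ := by positivity
  have h1 : (x + a * u) ^ 2 - (b * u) ^ 2 ≥ ε * x ^ 2 := by
    nlinarith [sq_nonneg (a * u + x / 2),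
      mul_nonneg (sub_nonneg.2 hux) (by linarith : (0:ℝ) ≤ x + u),
      mul_nonneg (by nlinarith : (0:ℝ) ≤ 1 / 2 - ε - (a ^ 2 + b ^ 2)) (sq_nonneg u)]
  have haS : -(Real.sqrt 2)⁻¹ ≤ a := by
    nlinarith [sq_nonneg (a + (Real.sqrt 2)⁻¹), sq_nonneg b, hs0]
  have h2 : x + a * u ≥ (1 - (Real.sqrt 2)⁻¹) * x := by
    nlinarith [mul_nonneg hu0 (by linarith : (0:ℝ) ≤ a + (Real.sqrt 2)⁻¹),
      mul_nonneg hs0.le (by linarith : (0:ℝ) ≤ x - u)]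
  have hs1 : (Real.sqrt 2)⁻¹ ≤ 1 := by nlinarith [hs0]
  have hR : 0 ≤ x + a * u := by nlinarith [mul_nonneg (by linarith : (0:ℝ) ≤ 1 - (Real.sqrt 2)⁻¹) hx]
  refine ⟨h1, h2, ?_⟩
  have ht0 : 0 < Real.sqrt (1 + 2 * ε) := Real.sqrt_pos.2 (by linarith)
  have ht : Real.sqrt (1 + 2 * ε) ^ 2 = 1 + 2 * ε :=
    Real.sq_sqrt (by linarith)
  have hb2 : b ^ 2 ≤ 1 / 2 := by nlinarith [sq_nonneg a]
  have hu2 : u ^ 2 ≤ x ^ 2 := pow_le_pow_left₀ hu0 hux 2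
  have hI2 : (b * u) ^ 2 ≤ x ^ 2 / 2 := by
    rw [mul_pow]
    calc b ^ 2 * u ^ 2 ≤ b ^ 2 * x ^ 2 := by
          exact mul_le_mul_of_nonneg_left hu2 (sq_nonneg b)
      _ ≤ 1 / 2 * x ^ 2 := mul_le_mul_of_nonneg_right hb2 (sq_nonneg x)
      _ = x ^ 2 / 2 := by ring
  have hkey : (1 + 2 * ε) * (b * u) ^ 2 ≤ (x + a * u) ^ 2 := by
    nlinarith [h1, mul_nonneg hε0.le (sub_nonneg.2 hI2)]
  rw [inv_mul_eq_div, le_div_iff₀ ht0]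
  have hsq : (|b * u| * Real.sqrt (1 + 2 * ε)) ^ 2 ≤ (x + a * u) ^ 2 := by
    rw [mul_pow, _root_.sq_abs, ht]; linarith
  exact (pow_le_pow_iff_left₀ (by positivity) hR two_ne_zero).mp hsq
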